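/- For every integer k ≥ 1, the integral ∫_0^π (e^{2iθ} - 1)^k / sin(θ) dθ equals 2·(-1)^k·√π·Γ(k)/Γ(k + 1/2). -/

import Mathlib

open Complex Real

noncomputable def g (n : ℕ) (θ : ℝ) : ℂ :=
  Complex.exp (Complex.I * (n+1) * θ) * (Real.sin θ : ℂ) ^ n

lemma g_cont (n : ℕ) : Continuous (g n) := by
  unfold g
  exact (Complex.continuous_exp.comp (by continuity)).mul
    ((Complex.continuous_ofReal.comp Real.continuous_sin).pow n)

lemma g_intble (n : ℕ) : IntervalIntegrable (g n) MeasureTheory.volume 0 Real.pi :=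
  (g_cont n).intervalIntegrable _ _

lemma key (n : ℕ) :
    (2*(n:ℂ)+3) * ∫ θ in (0:ℝ)..Real.pi, g (n+1) θ
      = Complex.I * ((n:ℂ)+1) * ∫ θ in (0:ℝ)..Real.pi, g n θ := by
  set F : ℝ → ℂ := fun θ =>
    -Complex.I * Complex.exp (Complex.I * (n+2) * θ) * (Real.sin θ : ℂ)^(n+1) with hF
  have hderiv : ∀ θ ∈ Set.uIcc (0:ℝ) Real.pi,
      HasDerivAt F ((2*(n:ℂ)+3) * g (n+1) θ - Complex.I * ((n:ℂ)+1) * g n θ) θ := by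
    intro θ _
    have h1 : HasDerivAt (fun t : ℝ => Complex.exp (Complex.I * (n+2) * t))
        (Complex.I * (n+2) * Complex.exp (Complex.I * (n+2) * θ)) θ := by
      have hin : HasDerivAt (fun t : ℝ => Complex.I * (n+2) * (t:ℂ)) (Complex.I * (n+2)) θ := by
        simpa using (Complex.ofRealCLM.hasDerivAt (x := θ)).const_mul (Complex.I * ((n:ℂ)+2))
      simpa [mul_comm] using hin.cexp
    have h2 : HasDerivAt (fun t : ℝ => ((Real.sin t : ℂ))^(n+1))
        (((n:ℂ)+1) * (Real.sin θ : ℂ)^n * (Real.cos θ : ℂ)) θ := by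
      have h := ((Real.hasDerivAt_sin θ).pow (n+1)).ofReal_comp
      convert h using 2 with t
      · exact (Complex.ofReal_pow _ _).symm
      · push_cast; ring
    have h4 : HasDerivAt F _ θ := ((h1.const_mul (-Complex.I)).mul h2)
    convert h4 using 1
    have hE : Complex.exp (Complex.I * ((n:ℂ)+2) * θ)
        = Complex.exp (Complex.I * ((n:ℂ)+1) * θ)
            * (Complex.cos θ + Complex.sin θ * Complex.I) := by
      rw [← Complex.exp_mul_I, ← Complex.exp_add]
      congr 1; ring
    have pyth : Complex.sin θ^2 + Complex.cos θ^2 = 1 := Complex.sin_sq_add_cos_sq θ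
    simp only [g]
    push_cast
    rw [show (Complex.I*((n:ℂ)+1+1)*(θ:ℂ)) = Complex.I*((n:ℂ)+2)*(θ:ℂ) from by ring, hE]
    linear_combination (Complex.I*((n:ℂ)+1) * Complex.exp (Complex.I*((n:ℂ)+1)*θ)
        * (Complex.sin θ)^n) * pyth
      + (((n:ℂ)+2) * Complex.exp (Complex.I*((n:ℂ)+1)*θ)
          * (Complex.cos θ + Complex.sin θ * Complex.I) * (Complex.sin θ)^(n+1)
        + ((n:ℂ)+1) * Complex.exp (Complex.I*((n:ℂ)+1)*θ)
          * (Complex.sin θ)^(n+1) * Complex.cos θ) * Complex.I_sq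
  have hint : IntervalIntegrable
      (fun θ => (2*(n:ℂ)+3) * g (n+1) θ - Complex.I * ((n:ℂ)+1) * g n θ)
      MeasureTheory.volume 0 Real.pi :=
    ((g_intble (n+1)).const_mul _).sub ((g_intble n).const_mul _)
  have heq := intervalIntegral.integral_eq_sub_of_hasDerivAt hderiv hint
  have hF0 : F Real.pi - F 0 = 0 := by simp [hF]
  rw [hF0, intervalIntegral.integral_sub ((g_intble (n+1)).const_mul _)
      ((g_intble n).const_mul _),
    intervalIntegral.integral_const_mul, intervalIntegral.integral_const_mul] at heq
  linear_combination heq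

lemma closed (n : ℕ) :
    (Real.Gamma ((n:ℝ) + 3/2) : ℂ) * (2:ℂ)^n * ∫ θ in (0:ℝ)..Real.pi, g n θ
      = Complex.I^(n+1) * (Real.sqrt Real.pi : ℂ) * (Real.Gamma ((n:ℝ)+1) : ℂ) := by
  induction n with
  | zero =>
    have h0 : ∫ θ in (0:ℝ)..Real.pi, g 0 θ = 2 * Complex.I := by
      simp only [g, Nat.cast_zero, zero_add, mul_one, pow_zero]
      rw [integral_exp_mul_complex Complex.I_ne_zero]
      have : Complex.I * (Real.pi : ℂ) = (Real.pi : ℂ) * Complex.I := by ring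
      rw [this, Complex.exp_pi_mul_I]
      norm_num
    have hg : Real.Gamma ((3:ℝ)/2) = Real.sqrt Real.pi / 2 := by
      have : ((3:ℝ)/2) = 1/2 + 1 := by norm_num
      rw [this, Real.Gamma_add_one (by norm_num), Real.Gamma_one_half_eq]
      ring
    rw [h0]
    norm_num [hg, Real.Gamma_one]
    ring
  | succ n ih =>
    have hkey := key n
    have hG1 : Real.Gamma ((n:ℝ)+1+1) = ((n:ℝ)+1) * Real.Gamma ((n:ℝ)+1) :=
      Real.Gamma_add_one (by positivity)
    have hG2 : Real.Gamma ((n:ℝ)+1+3/2) = ((n:ℝ)+3/2) * Real.Gamma ((n:ℝ)+3/2) := by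
      have : ((n:ℝ)+1+3/2) = ((n:ℝ)+3/2) + 1 := by ring
      rw [this, Real.Gamma_add_one (by positivity)]
    push_cast [hG1, hG2]
    linear_combination ((Real.Gamma ((n:ℝ)+3/2) : ℂ)) * 2^n * hkey
      + Complex.I * ((n:ℂ)+1) * ih

lemma hfac (θ : ℝ) : Complex.exp (2*Complex.I*θ) - 1
    = 2*Complex.I*(Real.sin θ:ℂ)*Complex.exp (Complex.I*θ) := by
  have hmul : Complex.exp (-(θ:ℂ)*Complex.I) * Complex.exp ((θ:ℂ)*Complex.I) = 1 := by
    rw [← Complex.exp_add]; simp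
  have hsin : (Real.sin θ : ℂ)
      = (Complex.exp (-(θ:ℂ)*Complex.I) - Complex.exp ((θ:ℂ)*Complex.I)) * Complex.I / 2 := by
    rw [Complex.ofReal_sin, Complex.sin]
  have h2 : Complex.exp (2*Complex.I*(θ:ℂ))
      = Complex.exp ((θ:ℂ)*Complex.I) * Complex.exp ((θ:ℂ)*Complex.I) := by
    rw [← Complex.exp_add]; congr 1; ring
  have hIθ : Complex.exp (Complex.I*(θ:ℂ)) = Complex.exp ((θ:ℂ)*Complex.I) := by
    congr 1; ring
  rw [h2, hsin, hIθ]
  linear_combination (-Complex.I^2) * hmul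
    + (Complex.exp ((θ:ℂ)*Complex.I)^2 - 1) * Complex.I_sq

/-- For every integer `k ≥ 1`,
`∫_0^π (e^{2iθ} - 1)^k / sin θ dθ = 2 (-1)^k √π Γ(k)/Γ(k + 1/2)`. -/
theorem stmt5 (k : ℕ) (hk : 1 ≤ k) :
    ∫ θ in (0:ℝ)..Real.pi, (Complex.exp (2 * Complex.I * θ) - 1) ^ k / (Real.sin θ : ℂ) =
      2 * (-1 : ℂ) ^ k * (Real.sqrt Real.pi : ℂ) * (Real.Gamma k : ℂ) /
        (Real.Gamma (k + 1/2) : ℂ) := by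
  obtain ⟨m, rfl⟩ : ∃ m, k = m + 1 := ⟨k - 1, (Nat.succ_pred_eq_of_pos hk).symm⟩
  have hπ : ∀ᵐ (θ:ℝ), θ ≠ Real.pi := by
    rw [MeasureTheory.ae_iff]
    simp
  have h1 : ∀ᵐ θ : ℝ, θ ∈ Set.uIoc (0:ℝ) Real.pi →
      (Complex.exp (2 * Complex.I * θ) - 1) ^ (m+1) / (Real.sin θ : ℂ)
        = (2*Complex.I)^(m+1) * g m θ := by
    filter_upwards [hπ] with θ hθ hmem
    rw [Set.uIoc_of_le Real.pi_pos.le] at hmem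
    have hsp : 0 < Real.sin θ :=
      Real.sin_pos_of_pos_of_lt_pi hmem.1 (lt_of_le_of_ne hmem.2 hθ)
    have hs : (Real.sin θ : ℂ) ≠ 0 := by exact_mod_cast hsp.ne'
    rw [hfac θ]
    simp only [g]
    rw [div_eq_iff hs, mul_pow, mul_pow, ← Complex.exp_nat_mul]
    rw [show ((m+1:ℕ):ℂ) * (Complex.I * θ) = Complex.I * ((m:ℂ)+1) * θ from by push_cast; ring]
    ring
  rw [intervalIntegral.integral_congr_ae h1, intervalIntegral.integral_const_mul]
  have hC := closed m
  have hGpos : (0:ℝ) < Real.Gamma ((m:ℝ)+3/2) := Real.Gamma_pos_of_pos (by positivity)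
  have hGC : ((Real.Gamma ((m:ℝ)+3/2)) : ℂ) ≠ 0 := by exact_mod_cast hGpos.ne'
  rw [show ((m+1:ℕ):ℝ) + 1/2 = (m:ℝ)+3/2 from by push_cast; ring,
    show ((m+1:ℕ):ℝ) = (m:ℝ)+1 from by push_cast; ring]
  rw [eq_div_iff hGC]
  have hIk : Complex.I^(m+1) * Complex.I^(m+1) = (-1:ℂ)^(m+1) := by
    rw [← mul_pow, Complex.I_mul_I]
  linear_combination 2 * Complex.I^(m+1) * hC
    + 2 * ((Real.sqrt Real.pi : ℂ)) * ((Real.Gamma ((m:ℝ)+1)):ℂ) * hIk
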